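/- Let G be a finite simple graph, π a vertex clique-partition of G, e_π a clique cluster-partition of V(G) based on π, and G^{md} any multiple clique cluster-whiskered graph built from this data. Then the graph G^{md} is vertex decomposable (equivalently, its independence complex Ind G^{md} is a (nonpure) vertex decomposable simplicial complex). -/

import Mathlib

namespace Paper

variable {V : Type*}

/-- `S` is an independent vertex set of the graph `H` (equivalently, of any induced
subgraph of `H` containing `S`): its vertices are pairwise non-adjacent. -/
def IndepOn (H : SimpleGraph V) (S : Set V) : Prop :=
  ∀ x ∈ S, ∀ y ∈ S, ¬ H.Adj x y

/-- `S` is a maximal independent vertex set of the graph `H`. -/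
def MaxIndep (H : SimpleGraph V) (S : Set V) : Prop :=
  IndepOn H S ∧ ∀ T : Set V, IndepOn H T → S ⊆ T → T = S

/-- Vertex decomposability of the induced subgraph of `H` on the vertex set `s`:
either the induced subgraph has no edges, or there is a shedding vertex `x ∈ s`, i.e.
a vertex such that (1) the induced subgraphs on `s` minus the closed neighbourhood of
`x` and on `s \ {x}` are vertex decomposable, and (2) every independent set `S` of the
induced subgraph on `s` minus the closed neighbourhood of `x` extends by some
neighbour `y` of `x` in `s` to an independent set `S ∪ {y}` of the induced subgraph
on `s \ {x}`. -/
inductive VD (H : SimpleGraph V) : Set V → Prop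
  | noEdges (s : Set V) (h : ∀ x ∈ s, ∀ y ∈ s, ¬ H.Adj x y) : VD H s
  | shed (s : Set V) (x : V) (hx : x ∈ s)
      (hlink : VD H {y ∈ s | y ≠ x ∧ ¬ H.Adj x y})
      (hdel : VD H (s \ {x}))
      (hshed : ∀ S ⊆ {y ∈ s | y ≠ x ∧ ¬ H.Adj x y}, IndepOn H S →
        ∃ y ∈ s, H.Adj x y ∧ IndepOn H (S ∪ {y})) : VD H s

/-- The data exhibiting `H`, restricted to the vertex set `T`, as a multiple clique
cluster-whiskered graph `G^{md}` of type `(d, r)` over the base graph `G` (the induced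
subgraph of `H` on `Vg`), built from a vertex clique-partition `π = {W_1, …, W_d}`,
a clique cluster-partition `e_π = {U_1, …, U_s}` based on `π`, and added vertex
sets `A_1, …, A_d`, `B_1, …, B_r` inducing vertex decomposable subgraphs. -/
structure MccWhiskered (H : SimpleGraph V) (T : Set V) (d s r : ℕ) where
  hrs : r ≤ s
  /-- the vertex set of the base graph `G`; the edges of `G` are the edges of `H`
  between vertices of `Vg`, i.e. `G` is the induced subgraph of `H` on `Vg`. -/
  Vg : Set V
  /-- the vertex clique-partition `π = {W_1, …, W_d}` of `G` -/
  W : Fin d → Set V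
  /-- the clique cluster-partition `e_π = {U_1, …, U_s}` based on `π` -/
  U : Fin s → Set V
  W_ne : ∀ i, (W i).Nonempty
  W_sub : ∀ i, W i ⊆ Vg
  W_disj : ∀ i j, i ≠ j → Disjoint (W i) (W j)
  W_cover : Vg ⊆ ⋃ i, W i
  W_clique : ∀ i, ∀ x ∈ W i, ∀ y ∈ W i, x ≠ y → H.Adj x y
  U_ne : ∀ j, (U j).Nonempty
  U_sub : ∀ j, U j ⊆ Vg
  U_disj : ∀ j k, j ≠ k → Disjoint (U j) (U k)
  U_cover : Vg ⊆ ⋃ j, U j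
  /-- each clique of `π` is contained in some cluster -/
  W_in_U : ∀ i, ∃ j, W i ⊆ U j
  /-- two distinct cliques of `π` lying in a common cluster have no edge between them -/
  cluster_indep : ∀ i i', i ≠ i' → ∀ j, W i ⊆ U j → W i' ⊆ U j →
    ∀ x ∈ W i, ∀ y ∈ W i', ¬ H.Adj x y
  /-- the first `r` clusters are unions of at least two cliques of `π` -/
  U_multi : ∀ j : Fin r, ∃ i i' : Fin d, i ≠ i' ∧
    W i ⊆ U (Fin.castLE hrs j) ∧ W i' ⊆ U (Fin.castLE hrs j)
  /-- the remaining `s - r` clusters each coincide with a single clique of `π` -/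
  U_single : ∀ j : Fin s, r ≤ (j : ℕ) → ∃ i, U j = W i
  /-- the added whisker sets `A_1, …, A_d` -/
  A : Fin d → Set V
  /-- the added whisker sets `B_1, …, B_r` -/
  B : Fin r → Set V
  A_ne : ∀ i, (A i).Nonempty
  B_ne : ∀ j, (B j).Nonempty
  A_disj_Vg : ∀ i, Disjoint (A i) Vg
  B_disj_Vg : ∀ j, Disjoint (B j) Vg
  A_disj : ∀ i i', i ≠ i' → Disjoint (A i) (A i')
  B_disj : ∀ j j', j ≠ j' → Disjoint (B j) (B j')
  AB_disj : ∀ i j, Disjoint (A i) (B j)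
  /-- the vertex set of `G^{md}` -/
  total : T = Vg ∪ (⋃ i, A i) ∪ (⋃ j, B j)
  /-- each vertex of `A i` is adjacent to every vertex of `W i` -/
  A_adj : ∀ i, ∀ a ∈ A i, ∀ w ∈ W i, H.Adj a w
  /-- each vertex of `B j` is adjacent to every vertex of `U j` -/
  B_adj : ∀ j, ∀ b ∈ B j, ∀ u ∈ U (Fin.castLE hrs j), H.Adj b u
  /-- besides the edges of `G`, the whisker edges, and edges inside the sets
  `A i` and `B j`, there are no other edges in `G^{md}` -/
  no_other_edges : ∀ x ∈ T, ∀ y ∈ T, H.Adj x y →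
    (x ∈ Vg ∧ y ∈ Vg) ∨
    (∃ i, (x ∈ A i ∧ y ∈ W i) ∨ (y ∈ A i ∧ x ∈ W i) ∨ (x ∈ A i ∧ y ∈ A i)) ∨
    (∃ j, (x ∈ B j ∧ y ∈ U (Fin.castLE hrs j)) ∨
          (y ∈ B j ∧ x ∈ U (Fin.castLE hrs j)) ∨ (x ∈ B j ∧ y ∈ B j))
  /-- the induced subgraph on each `A i` is vertex decomposable -/
  A_vd : ∀ i, VD H (A i)
  /-- the induced subgraph on each `B j` is vertex decomposable -/
  B_vd : ∀ j, VD H (B j)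

theorem vd_isolated {H : SimpleGraph V} {t : Set V} (h : VD H t) :
    ∀ s x, x ∈ s → (∀ y ∈ s, ¬ H.Adj x y) → t = s \ {x} → VD H s := by
  induction h with
  | noEdges t ht =>
    intro s x hx hiso hts
    apply VD.noEdges
    intro a ha b hb hab
    by_cases hax : a = x
    · exact hiso b hb (hax ▸ hab)
    · by_cases hbx : b = x
      · exact hiso a ha (hbx ▸ hab).symm
      · exact ht a (hts ▸ ⟨ha, hax⟩) b (hts ▸ ⟨hb, hbx⟩) hab
  | shed t z hz hlink hdel hshed ihlink ihdel =>
    intro s x hx hiso hts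
    subst hts
    have hzs : z ∈ s := hz.1
    have hzx : z ≠ x := hz.2
    apply VD.shed s z hzs
    · apply ihlink _ x
      · exact ⟨hx, hzx.symm, fun h => hiso z hzs h.symm⟩
      · intro y hy; exact hiso y hy.1
      · ext y
        simp only [Set.mem_setOf_eq, Set.mem_diff, Set.mem_singleton_iff]
        tauto
    · apply ihdel _ x
      · exact ⟨hx, fun h => hzx h.symm⟩
      · intro y hy; exact hiso y hy.1
      · ext y
        simp only [Set.mem_diff, Set.mem_singleton_iff]
        tauto
    · intro S hS hSind
      obtain ⟨y, hyt, hadj, hind⟩ := hshed (S \ {x})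
        (by
          intro a ha
          obtain ⟨haS, hax⟩ := ha
          obtain ⟨has, haz, hanadj⟩ := hS haS
          exact ⟨⟨has, hax⟩, haz, hanadj⟩)
        (fun a ha b hb => hSind a ha.1 b hb.1)
      refine ⟨y, hyt.1, hadj, ?_⟩
      have hys : y ∈ s := hyt.1
      intro a ha b hb hab
      have hmem : ∀ c, c ∈ S ∪ {y} → c ∈ s := by
        intro c hc
        rcases hc with hc | hc
        · exact (hS hc).1
        · exact hc ▸ hys
      by_cases hax : a = x
      · exact hiso b (hmem b hb) (hax ▸ hab)
      · by_cases hbx : b = x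
        · exact hiso a (hmem a ha) (hbx ▸ hab).symm
        · have ha' : a ∈ (S \ {x}) ∪ {y} := by
            rcases ha with ha | ha
            · exact Or.inl ⟨ha, hax⟩
            · exact Or.inr ha
          have hb' : b ∈ (S \ {x}) ∪ {y} := by
            rcases hb with hb | hb
            · exact Or.inl ⟨hb, hbx⟩
            · exact Or.inr hb
          exact hind a ha' b hb' hab

theorem vd_union_indep [Fintype V] {H : SimpleGraph V} {s2 : Set V} (h2 : VD H s2) :
    ∀ n s1, s1.ncard ≤ n → (∀ a ∈ s1, ∀ b ∈ s1, ¬ H.Adj a b) →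
      Disjoint s1 s2 → (∀ a ∈ s1, ∀ b ∈ s2, ¬ H.Adj a b) → VD H (s1 ∪ s2) := by
  intro n
  induction n with
  | zero =>
    intro s1 hcard _ _ _
    have : s1 = ∅ := (Set.ncard_eq_zero (Set.toFinite s1)).mp (Nat.le_zero.mp hcard)
    subst this
    simpa using h2
  | succ n ih =>
    intro s1 hcard hne hdisj h12
    rcases s1.eq_empty_or_nonempty with rfl | ⟨x, hx⟩
    · simpa using h2
    · have hxs2 : x ∉ s2 := fun h => (hdisj.ne_of_mem hx h) rfl
      have hsub : VD H ((s1 \ {x}) ∪ s2) := by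
        apply ih
        · have h1 : (s1 \ {x}).ncard < s1.ncard :=
            Set.ncard_diff_singleton_lt_of_mem hx (Set.toFinite s1)
          omega
        · intro a ha b hb; exact hne a ha.1 b hb.1
        · exact Disjoint.mono_left Set.diff_subset hdisj
        · intro a ha b hb; exact h12 a ha.1 b hb
      apply vd_isolated hsub (s1 ∪ s2) x (Or.inl hx)
      · intro y hy
        rcases hy with hy | hy
        · exact hne x hx y hy
        · exact h12 x hx y hy
      · ext y
        simp only [Set.mem_union, Set.mem_diff, Set.mem_singleton_iff]
        constructor
        · rintro (⟨h1, h2'⟩ | h1)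
          · exact ⟨Or.inl h1, h2'⟩
          · exact ⟨Or.inr h1, fun h => hxs2 (h ▸ h1)⟩
        · rintro ⟨h1 | h1, h2'⟩
          · exact Or.inl ⟨h1, h2'⟩
          · exact Or.inr h1


theorem vd_union [Fintype V] {H : SimpleGraph V} {s1 : Set V} (h1 : VD H s1) :
    ∀ s2, VD H s2 → Disjoint s1 s2 → (∀ a ∈ s1, ∀ b ∈ s2, ¬ H.Adj a b) →
      VD H (s1 ∪ s2) := by
  induction h1 with
  | noEdges s1 hne =>
    intro s2 h2 hdisj h12
    exact vd_union_indep h2 s1.ncard s1 le_rfl hne hdisj h12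
  | shed s1 z hz hlink hdel hshed ihlink ihdel =>
    intro s2 h2 hdisj h12
    have hzs2 : z ∉ s2 := fun h => (hdisj.ne_of_mem hz h) rfl
    apply VD.shed _ z (Or.inl hz)
    · have heq : {y ∈ s1 ∪ s2 | y ≠ z ∧ ¬ H.Adj z y} =
        {y ∈ s1 | y ≠ z ∧ ¬ H.Adj z y} ∪ s2 := by
        ext y
        simp only [Set.mem_setOf_eq, Set.mem_union]
        constructor
        · rintro ⟨hy | hy, h⟩
          · exact Or.inl ⟨hy, h⟩
          · exact Or.inr hy
        · rintro (⟨hy, h⟩ | hy)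
          · exact ⟨Or.inl hy, h⟩
          · exact ⟨Or.inr hy, fun h => hzs2 (h ▸ hy), fun h => h12 z hz y hy h⟩
      rw [heq]
      apply ihlink s2 h2
      · exact Disjoint.mono_left (Set.sep_subset _ _) hdisj
      · intro a ha b hb; exact h12 a ha.1 b hb
    · have heq : (s1 ∪ s2) \ {z} = (s1 \ {z}) ∪ s2 := by
        ext y
        simp only [Set.mem_union, Set.mem_diff, Set.mem_singleton_iff]
        constructor
        · rintro ⟨hy | hy, h⟩
          · exact Or.inl ⟨hy, h⟩
          · exact Or.inr hy
        · rintro (⟨hy, h⟩ | hy)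
          · exact ⟨Or.inl hy, h⟩
          · exact ⟨Or.inr hy, fun h => hzs2 (h ▸ hy)⟩
      rw [heq]
      apply ihdel s2 h2
      · exact Disjoint.mono_left Set.diff_subset hdisj
      · intro a ha b hb; exact h12 a ha.1 b hb
    · intro S hS hSind
      obtain ⟨y, hy1, hadj, hind⟩ := hshed (S ∩ s1)
        (by
          intro a ha
          obtain ⟨haS, has1⟩ := ha
          obtain ⟨_, haz, hanadj⟩ := hS haS
          exact ⟨has1, haz, hanadj⟩)
        (fun a ha b hb => hSind a ha.1 b hb.1)
      refine ⟨y, Or.inl hy1, hadj, ?_⟩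
      intro a ha b hb hab
      have key : ∀ c ∈ S ∪ {y}, c ∈ ((S ∩ s1) ∪ {y}) ∨ c ∈ s2 := by
        intro c hc
        rcases hc with hc | hc
        · rcases (hS hc).1 with h | h
          · exact Or.inl (Or.inl ⟨hc, h⟩)
          · exact Or.inr h
        · exact Or.inl (Or.inr hc)
      have hmemS : ∀ c ∈ (S ∩ s1) ∪ ({y} : Set V), c ∈ s1 := by
        intro c hc
        rcases hc with hc | hc
        · exact hc.2
        · exact hc ▸ hy1
      rcases key a ha with ha' | ha' <;> rcases key b hb with hb' | hb'
      · exact hind a ha' b hb' hab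
      · exact h12 a (hmemS a ha') b hb' hab
      · exact h12 b (hmemS b hb') a ha' hab.symm
      · have hys2 : y ∉ s2 := fun h => (hdisj.ne_of_mem hy1 h) rfl
        have haS : a ∈ S := by
          rcases ha with h | h
          · exact h
          · exact (hys2 (h ▸ ha')).elim
        have hbS : b ∈ S := by
          rcases hb with h | h
          · exact h
          · exact (hys2 (h ▸ hb')).elim
        exact hSind a haS b hbS hab

theorem vd_biUnion [Fintype V] {H : SimpleGraph V} {ι : Type} [DecidableEq ι]
    (C : ι → Set V) (t : Finset ι)
    (hvd : ∀ k, VD H (C k))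
    (hdisj : ∀ k k', k ≠ k' → Disjoint (C k) (C k'))
    (hne : ∀ k k', k ≠ k' → ∀ a ∈ C k, ∀ b ∈ C k', ¬ H.Adj a b) :
    VD H (⋃ k ∈ t, C k) := by
  induction t using Finset.induction with
  | empty => exact VD.noEdges _ (by simp)
  | insert a t ha ih =>
    rw [Finset.set_biUnion_insert]
    apply vd_union (hvd a) _ ih
    · rw [Set.disjoint_iUnion₂_right]
      intro k hk
      exact hdisj a k (fun h => ha (h ▸ hk))
    · intro x hx y hy
      simp only [Set.mem_iUnion] at hy
      obtain ⟨k, hk, hyk⟩ := hy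
      exact hne a k (fun h => ha (h ▸ hk)) x hx y hyk

theorem vd_gen_empty [Fintype V] {H : SimpleGraph V} {ι : Type} [Fintype ι]
    (T Vg : Set V) (C D : ι → Set V)
    (hVg : Vg = ∅)
    (hCC : ∀ k k', k ≠ k' → Disjoint (C k) (C k'))
    (hCvd : ∀ k, VD H (C k))
    (hDVg : ∀ k, D k ⊆ Vg)
    (hedge : ∀ x ∈ T, ∀ y ∈ T, H.Adj x y → (x ∈ Vg ∧ y ∈ Vg) ∨
      ∃ k, (x ∈ C k ∧ y ∈ D k) ∨ (y ∈ C k ∧ x ∈ D k) ∨ (x ∈ C k ∧ y ∈ C k))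
    (hT : T = Vg ∪ ⋃ k, C k) :
    VD H T := by
  classical
  subst hVg
  have hT' : T = ⋃ k ∈ (Finset.univ : Finset ι), C k := by
    rw [hT]; ext y; simp
  rw [hT']
  apply vd_biUnion C Finset.univ hCvd hCC
  intro k k' hkk' a ha b hb hab
  have haT : a ∈ T := by rw [hT]; right; exact Set.mem_iUnion.mpr ⟨k, ha⟩
  have hbT : b ∈ T := by rw [hT]; right; exact Set.mem_iUnion.mpr ⟨k', hb⟩
  rcases hedge a haT b hbT hab with ⟨h1, _⟩ | ⟨k'', hcase⟩
  · exact absurd h1 (Set.notMem_empty a)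
  · rcases hcase with ⟨_, h2⟩ | ⟨_, h2⟩ | ⟨h1, h2⟩
    · exact absurd (hDVg k'' h2) (Set.notMem_empty b)
    · exact absurd (hDVg k'' h2) (Set.notMem_empty a)
    · have e1 : k = k'' := by
        by_contra hne'
        exact (hCC k k'' hne').ne_of_mem ha h1 rfl
      have e2 : k' = k'' := by
        by_contra hne'
        exact (hCC k' k'' hne').ne_of_mem hb h2 rfl
      exact hkk' (e1.trans e2.symm)


theorem vd_gen [Fintype V] {H : SimpleGraph V} (n : ℕ) :
    ∀ {ι : Type} [Fintype ι] (T Vg : Set V) {d : ℕ} (W : Fin d → Set V)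
      (C D : ι → Set V),
    Vg.ncard ≤ n →
    (∀ i, (W i).Nonempty → ∃ k, D k = W i ∧ (C k).Nonempty) →
    Vg ⊆ (⋃ i, W i) →
    (∀ i, ∀ a ∈ W i, ∀ b ∈ W i, a ≠ b → H.Adj a b) →
    (∀ k, Disjoint (C k) Vg) →
    (∀ k k', k ≠ k' → Disjoint (C k) (C k')) →
    (∀ k, VD H (C k)) →
    (∀ k, D k ⊆ Vg) →
    (∀ k, ∀ c ∈ C k, ∀ u ∈ D k, H.Adj c u) →
    (∀ x ∈ T, ∀ y ∈ T, H.Adj x y → (x ∈ Vg ∧ y ∈ Vg) ∨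
      ∃ k, (x ∈ C k ∧ y ∈ D k) ∨ (y ∈ C k ∧ x ∈ D k) ∨ (x ∈ C k ∧ y ∈ C k)) →
    T = Vg ∪ ⋃ k, C k →
    VD H T := by
  induction n with
  | zero =>
    intro ι _ T Vg d W C D hcard _ _ _ _ hCC hCvd hDVg _ hedge hT
    have hVg : Vg = ∅ := (Set.ncard_eq_zero (Set.toFinite Vg)).mp (Nat.le_zero.mp hcard)
    exact vd_gen_empty T Vg C D hVg hCC hCvd hDVg hedge hT
  | succ n ih =>
    intro ι _ T Vg d W C D hcard hcov hWcov hclique hCVg hCC hCvd hDVg hCadj hedge hT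
    rcases Vg.eq_empty_or_nonempty with hVg | ⟨x, hx⟩
    · exact vd_gen_empty T Vg C D hVg hCC hCvd hDVg hedge hT
    · obtain ⟨i0, hxi0⟩ := Set.mem_iUnion.mp (hWcov hx)
      obtain ⟨k0, hDk0, c0, hc0⟩ := hcov i0 ⟨x, hxi0⟩
      have hxT : x ∈ T := by rw [hT]; exact Or.inl hx
      -- x is not adjacent to any vertex of C k when x ∉ D k
      have hCx : ∀ k, x ∉ D k → ∀ c ∈ C k, ¬ H.Adj x c := by
        intro k hxD c hc hadj
        have hcT : c ∈ T := by rw [hT]; right; exact Set.mem_iUnion.mpr ⟨k, hc⟩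
        rcases hedge x hxT c hcT hadj with ⟨_, h2⟩ | ⟨k', hcase⟩
        · exact (hCVg k).ne_of_mem hc h2 rfl
        · rcases hcase with ⟨h1, _⟩ | ⟨h1, h2⟩ | ⟨h1, _⟩
          · exact (hCVg k').ne_of_mem h1 hx rfl
          · have : k' = k := by
              by_contra hne'
              exact (hCC k' k hne').ne_of_mem h1 hc rfl
            exact hxD (this ▸ h2)
          · exact (hCVg k').ne_of_mem h1 hx rfl
      have hxC : ∀ k, x ∉ C k := fun k h => (hCVg k).ne_of_mem h hx rfl
      -- cliques containing x are wiped out by removing N[x]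
      have hWx : ∀ i, x ∈ W i → ∀ a ∈ W i, ¬(a ≠ x ∧ ¬ H.Adj x a) := by
        intro i hxi a ha ⟨hax, hnadj⟩
        exact hnadj (hclique i x hxi a ha (Ne.symm hax))
      apply VD.shed T x hxT
      · -- link
        set P : Set V := {y | y ≠ x ∧ ¬ H.Adj x y} with hP
        have hgoal : {y ∈ T | y ≠ x ∧ ¬ H.Adj x y} = T ∩ P := rfl
        rw [hgoal]
        apply ih (T ∩ P) (Vg ∩ P) (fun i => W i ∩ P) (fun k => C k ∩ P)
          (fun k => D k ∩ P)
        · have hsub : Vg ∩ P ⊆ Vg \ {x} := by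
            intro a ⟨ha, haP⟩; exact ⟨ha, haP.1⟩
          have h1 : (Vg \ {x}).ncard < Vg.ncard :=
            Set.ncard_diff_singleton_lt_of_mem hx (Set.toFinite Vg)
          have h2 : (Vg ∩ P).ncard ≤ (Vg \ {x}).ncard :=
            Set.ncard_le_ncard hsub (Set.toFinite _)
          omega
        · intro i ⟨a, haW, haP⟩
          obtain ⟨k, hDk, hCk⟩ := hcov i ⟨a, haW⟩
          have hxD : x ∉ D k := by
            rw [hDk]
            intro hxW
            exact hWx i hxW a haW haP
          refine ⟨k, by rw [hDk], ?_⟩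
          have : C k ∩ P = C k := by
            apply Set.inter_eq_self_of_subset_left
            intro c hc
            exact ⟨fun h => hxC k (h ▸ hc), fun h => hCx k hxD c hc h⟩
          rw [this]; exact hCk
        · intro a ⟨ha, haP⟩
          obtain ⟨i, hi⟩ := Set.mem_iUnion.mp (hWcov ha)
          exact Set.mem_iUnion.mpr ⟨i, hi, haP⟩
        · intro i a ha b hb hab; exact hclique i a ha.1 b hb.1 hab
        · intro k; exact Disjoint.mono Set.inter_subset_left Set.inter_subset_left (hCVg k)
        · intro k k' h; exact Disjoint.mono Set.inter_subset_left Set.inter_subset_left (hCC k k' h)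
        · intro k
          by_cases hxD : x ∈ D k
          · have : C k ∩ P = ∅ := by
              ext c
              simp only [Set.mem_inter_iff, Set.mem_empty_iff_false, iff_false, not_and]
              intro hc hcP
              exact hcP.2 ((hCadj k c hc x hxD).symm)
            rw [this]
            exact VD.noEdges ∅ (by simp)
          · have : C k ∩ P = C k := by
              apply Set.inter_eq_self_of_subset_left
              intro c hc
              exact ⟨fun h => hxC k (h ▸ hc), fun h => hCx k hxD c hc h⟩
            rw [this]
            exact hCvd k
        · intro k; exact Set.inter_subset_inter_left P (hDVg k)
        · intro k c hc u hu; exact hCadj k c hc.1 u hu.1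
        · intro a ha b hb hab
          rcases hedge a ha.1 b hb.1 hab with ⟨h1, h2⟩ | ⟨k, hcase⟩
          · exact Or.inl ⟨⟨h1, ha.2⟩, ⟨h2, hb.2⟩⟩
          · refine Or.inr ⟨k, ?_⟩
            rcases hcase with ⟨h1, h2⟩ | ⟨h1, h2⟩ | ⟨h1, h2⟩
            · exact Or.inl ⟨⟨h1, ha.2⟩, ⟨h2, hb.2⟩⟩
            · exact Or.inr (Or.inl ⟨⟨h1, hb.2⟩, ⟨h2, ha.2⟩⟩)
            · exact Or.inr (Or.inr ⟨⟨h1, ha.2⟩, ⟨h2, hb.2⟩⟩)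
        · rw [hT]
          ext y
          simp only [Set.mem_inter_iff, Set.mem_union, Set.mem_iUnion]
          tauto
      · -- deletion
        apply ih (T \ {x}) (Vg \ {x}) (fun i => W i \ {x}) (fun k => C k \ {x})
          (fun k => D k \ {x})
        · have h1 : (Vg \ {x}).ncard < Vg.ncard :=
            Set.ncard_diff_singleton_lt_of_mem hx (Set.toFinite Vg)
          omega
        · intro i ⟨a, haW, hax⟩
          obtain ⟨k, hDk, hCk⟩ := hcov i ⟨a, haW⟩
          refine ⟨k, by rw [hDk], ?_⟩
          rw [Set.diff_singleton_eq_self (hxC k)]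
          exact hCk
        · intro a ⟨ha, hax⟩
          obtain ⟨i, hi⟩ := Set.mem_iUnion.mp (hWcov ha)
          exact Set.mem_iUnion.mpr ⟨i, hi, hax⟩
        · intro i a ha b hb hab; exact hclique i a ha.1 b hb.1 hab
        · intro k; exact Disjoint.mono Set.diff_subset Set.diff_subset (hCVg k)
        · intro k k' h; exact Disjoint.mono Set.diff_subset Set.diff_subset (hCC k k' h)
        · intro k
          rw [Set.diff_singleton_eq_self (hxC k)]
          exact hCvd k
        · intro k; exact Set.diff_subset_diff_left (hDVg k)
        · intro k c hc u hu; exact hCadj k c hc.1 u hu.1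
        · intro a ha b hb hab
          rcases hedge a ha.1 b hb.1 hab with ⟨h1, h2⟩ | ⟨k, hcase⟩
          · exact Or.inl ⟨⟨h1, ha.2⟩, ⟨h2, hb.2⟩⟩
          · refine Or.inr ⟨k, ?_⟩
            rcases hcase with ⟨h1, h2⟩ | ⟨h1, h2⟩ | ⟨h1, h2⟩
            · exact Or.inl ⟨⟨h1, ha.2⟩, ⟨h2, hb.2⟩⟩
            · exact Or.inr (Or.inl ⟨⟨h1, hb.2⟩, ⟨h2, ha.2⟩⟩)
            · exact Or.inr (Or.inr ⟨⟨h1, ha.2⟩, ⟨h2, hb.2⟩⟩)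
        · rw [hT]
          ext y
          simp only [Set.mem_diff, Set.mem_union, Set.mem_iUnion, Set.mem_singleton_iff]
          tauto
      · -- shedding condition
        intro S hS hSind
        have hc0T : c0 ∈ T := by rw [hT]; right; exact Set.mem_iUnion.mpr ⟨k0, hc0⟩
        have hxD0 : x ∈ D k0 := by rw [hDk0]; exact hxi0
        refine ⟨c0, hc0T, (hCadj k0 c0 hc0 x hxD0).symm, ?_⟩
        have key : ∀ a ∈ S, ¬ H.Adj a c0 := by
          intro a haS hadj
          obtain ⟨haT, hax, hanadj⟩ := hS haS
          rcases hedge a haT c0 hc0T hadj with ⟨_, h2⟩ | ⟨k, hcase⟩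
          · exact (hCVg k0).ne_of_mem hc0 h2 rfl
          · rcases hcase with ⟨_, h2⟩ | ⟨h1, h2⟩ | ⟨h1, h2⟩
            · exact (hCVg k0).ne_of_mem hc0 (hDVg k h2) rfl
            · have ek : k = k0 := by
                by_contra hne'
                exact (hCC k k0 hne').ne_of_mem h1 hc0 rfl
              rw [ek, hDk0] at h2
              exact hanadj (hclique i0 x hxi0 a h2 (Ne.symm hax))
            · have ek : k = k0 := by
                by_contra hne'
                exact (hCC k k0 hne').ne_of_mem h2 hc0 rfl
              exact hanadj ((hCadj k0 a (ek ▸ h1) x hxD0).symm)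
        intro a ha b hb hab
        rcases ha with haS | hac0 <;> rcases hb with hbS | hbc0
        · exact hSind a haS b hbS hab
        · exact key a haS (hbc0 ▸ hab)
        · exact key b hbS (hac0 ▸ hab).symm
        · exact H.irrefl ((hac0.trans hbc0.symm) ▸ hab)

/-- **Theorem (main result).** For any finite simple graph `G`, any vertex
clique-partition `π` of `G`, any clique cluster-partition `e_π` based on `π`, and any
multiple clique cluster-whiskered graph `G^{md}` built from this data, the graph
`G^{md}` is vertex decomposable. -/
theorem mccWhiskered_vertexDecomposable [Fintype V]
    (H : SimpleGraph V) (d s r : ℕ) (M : MccWhiskered H Set.univ d s r) :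
    VD H Set.univ := by
  classical
  apply vd_gen (H := H) M.Vg.ncard (ι := Fin d ⊕ Fin r) Set.univ M.Vg M.W
    (Sum.elim M.A M.B)
    (Sum.elim M.W (fun j => M.U (Fin.castLE M.hrs j)))
  · exact le_rfl
  · intro i hi
    exact ⟨Sum.inl i, rfl, M.A_ne i⟩
  · exact M.W_cover
  · exact M.W_clique
  · rintro (i | j)
    · exact M.A_disj_Vg i
    · exact M.B_disj_Vg j
  · rintro (i | j) (i' | j') hne
    · exact M.A_disj i i' (fun h => hne (h ▸ rfl))
    · exact M.AB_disj i j'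
    · exact (M.AB_disj i' j).symm
    · exact M.B_disj j j' (fun h => hne (h ▸ rfl))
  · rintro (i | j)
    · exact M.A_vd i
    · exact M.B_vd j
  · rintro (i | j)
    · exact M.W_sub i
    · exact M.U_sub _
  · rintro (i | j) c hc u hu
    · exact M.A_adj i c hc u hu
    · exact M.B_adj j c hc u hu
  · intro x hxT y hyT hadj
    rcases M.no_other_edges x hxT y hyT hadj with h | ⟨i, h⟩ | ⟨j, h⟩
    · exact Or.inl h
    · exact Or.inr ⟨Sum.inl i, h⟩
    · exact Or.inr ⟨Sum.inr j, h⟩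
  · have h2 : M.Vg ∪ ⋃ k, Sum.elim M.A M.B k =
        (M.Vg ∪ ⋃ i, M.A i) ∪ ⋃ j, M.B j := by
      ext y
      simp only [Set.mem_union, Set.mem_iUnion, Sum.exists, Sum.elim_inl, Sum.elim_inr]
      tauto
    rw [h2]
    exact M.total

end Paper
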